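/- For positive integers m, n and positive reals a, b with a ≠ b in general, ∫_0^∞ t^{m-1} e^{-at} Γ(n, bt) dt = Γ(n)·Γ(m)/a^m · [1 - (b/(a+b))^n ∑_{j=0}^{m-1} C(n+j-1, j)(a/(a+b))^j]; in particular the integral converges and is finite. -/

import Mathlib

open MeasureTheory Real Set Finset Filter Topology

lemma intOn (k : ℕ) {c : ℝ} (hc : 0 < c) (x : ℝ) :
    IntegrableOn (fun t : ℝ => t ^ k * Real.exp (-(c * t))) (Ioi x) := by
  apply integrable_of_isBigO_exp_neg (half_pos hc) (by fun_prop)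
  apply Asymptotics.IsLittleO.isBigO
  apply Asymptotics.isLittleO_of_tendsto (fun y h => absurd h (Real.exp_ne_zero _))
  have h := tendsto_rpow_mul_exp_neg_mul_atTop_nhds_zero (k : ℝ) (c/2) (half_pos hc)
  apply h.congr'
  filter_upwards [eventually_gt_atTop 0] with t ht
  rw [Real.rpow_natCast]
  rw [mul_div_assoc, ← Real.exp_sub]
  ring_nf

lemma intVal (k : ℕ) {c : ℝ} (hc : 0 < c) :
    ∫ t in Ioi (0:ℝ), t ^ k * Real.exp (-(c * t)) = (k.factorial : ℝ) / c ^ (k + 1) := by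
  have h := integral_rpow_mul_exp_neg_mul_Ioi (a := (k + 1 : ℝ)) (by positivity) hc
  rw [show ((k:ℝ) + 1 - 1) = (k:ℝ) by ring] at h
  simp_rw [Real.rpow_natCast] at h
  rw [h, Real.Gamma_nat_eq_factorial, show ((k:ℝ)+1) = ((k+1 : ℕ):ℝ) by push_cast; ring,
    Real.rpow_natCast, div_pow, one_pow]
  ring

lemma incGamma (N : ℕ) (x : ℝ) :
    ∫ s in Ioi x, s ^ N * Real.exp (-s)
      = (∑ k ∈ Finset.range (N+1), x ^ k * ((N.factorial : ℝ) / k.factorial)) * Real.exp (-x) := by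
  set c : ℕ → ℝ := fun k => (N.factorial : ℝ) / k.factorial with hc
  have hcN : c N = 1 := by
    simp only [hc]
    exact div_self (by exact_mod_cast N.factorial_ne_zero)
  have hderiv : ∀ y : ℝ, HasDerivAt
      (fun y : ℝ => -((∑ k ∈ Finset.range (N+1), y ^ k * c k) * Real.exp (-y)))
      (y ^ N * Real.exp (-y)) y := by
    intro y
    have h1 : HasDerivAt (fun y : ℝ => ∑ k ∈ Finset.range (N+1), y ^ k * c k)
        (∑ k ∈ Finset.range (N+1), (k : ℝ) * y ^ (k-1) * c k) y := by
      apply HasDerivAt.fun_sum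
      intro k _
      simpa [mul_comm, mul_assoc, mul_left_comm] using (hasDerivAt_pow k y).mul_const (c k)
    have h2 : HasDerivAt (fun y : ℝ => Real.exp (-y)) (-Real.exp (-y)) y := by
      simpa using ((hasDerivAt_id y).neg).exp
    have h3 := (h1.fun_mul h2).fun_neg
    refine HasDerivAt.congr_deriv h3 ?_
    have hS : ∑ k ∈ Finset.range (N+1), (k : ℝ) * y ^ (k-1) * c k
        = ∑ k ∈ Finset.range N, y ^ k * c k := by
      rw [Finset.sum_range_succ']
      simp only [Nat.cast_zero, zero_mul, add_zero, Nat.add_sub_cancel]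
      apply Finset.sum_congr rfl
      intro k _
      have : c (k+1) * (k+1 : ℝ) = c k := by
        simp only [hc, Nat.factorial_succ]
        have hk : (k.factorial : ℝ) ≠ 0 := by exact_mod_cast k.factorial_ne_zero
        push_cast
        field_simp
      calc ((k+1:ℕ):ℝ) * y ^ k * c (k+1) = ((k:ℝ)+1) * y ^ k * c (k+1) := by push_cast; ring
        _ = y ^ k * (c (k+1) * ((k:ℝ)+1)) := by ring
        _ = y ^ k * c k := by rw [this]
    rw [hS, Finset.sum_range_succ, hcN]
    ring
  have htend : Tendsto (fun y : ℝ => -((∑ k ∈ Finset.range (N+1), y ^ k * c k) * Real.exp (-y)))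
      atTop (𝓝 0) := by
    have : ∀ y : ℝ, -((∑ k ∈ Finset.range (N+1), y ^ k * c k) * Real.exp (-y))
        = -(∑ k ∈ Finset.range (N+1), (y ^ k * Real.exp (-y)) * c k) := by
      intro y; rw [Finset.sum_mul]; congr 1; apply Finset.sum_congr rfl; intros; ring
    simp_rw [this]
    rw [show (0:ℝ) = -(∑ k ∈ Finset.range (N+1), (0:ℝ) * c k) by simp]
    apply Tendsto.neg
    apply tendsto_finset_sum
    intro k _
    exact (Real.tendsto_pow_mul_exp_neg_atTop_nhds_zero k).mul_const (c k)
  have hint : IntegrableOn (fun s : ℝ => s ^ N * Real.exp (-s)) (Ioi x) := by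
    have := intOn N zero_lt_one x
    simpa using this
  have := integral_Ioi_of_hasDerivAt_of_tendsto' (fun y _ => hderiv y) hint htend
  rw [this]
  ring

lemma keyT (p q : ℝ) (hpq : p + q = 1) (N : ℕ) : ∀ M : ℕ,
    q ^ (N+1) * ∑ j ∈ Finset.range (M+1), ((N+j).choose j : ℝ) * p ^ j
    - q ^ (N+2) * ∑ j ∈ Finset.range (M+1), ((N+1+j).choose j : ℝ) * p ^ j
    = ((M+N+1).choose (N+1) : ℝ) * p ^ (M+1) * q ^ (N+1) := by
  intro M
  induction M with
  | zero =>
    simp only [Finset.range_one, Finset.sum_singleton, pow_zero, mul_one,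
      Nat.add_zero, Nat.choose_zero_right, Nat.cast_one, Nat.choose_self, zero_add, pow_one]
    linear_combination (-(q^(N+1))) * hpq
  | succ M ih =>
    rw [Finset.sum_range_succ (fun j => ((N+j).choose j : ℝ) * p ^ j) (M+1),
      Finset.sum_range_succ (fun j => ((N+1+j).choose j : ℝ) * p ^ j) (M+1)]
    have h1 : ((N+M+2).choose (M+1) : ℝ) = ((M+N+1).choose (N+1) : ℝ) + ((N+M+1).choose (M+1) : ℝ) := by
      have e1 : (N+M+2).choose (M+1) = (N+M+1).choose M + (N+M+1).choose (M+1) :=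
        Nat.choose_succ_succ _ _
      have e2 : (N+M+1).choose M = (M+N+1).choose (N+1) := by
        rw [show M+N+1 = N+M+1 by omega]
        have := Nat.choose_symm (n := N+M+1) (k := N+1) (by omega)
        rwa [show N+M+1-(N+1) = M by omega] at this
      rw [e1, e2]; push_cast; ring
    have h2 : ((M+1+N+1).choose (N+1) : ℝ) = ((N+M+2).choose (M+1) : ℝ) := by
      have := Nat.choose_symm (n := M+N+2) (k := M+1) (by omega)
      rw [show M+N+2-(M+1) = N+1 by omega] at this
      rw [show M+1+N+1 = M+N+2 by omega, show N+M+2 = M+N+2 by omega, this]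
    have hg1 : (N+(M+1)).choose (M+1) = (N+M+1).choose (M+1) := rfl
    have hg2 : (N+1+(M+1)).choose (M+1) = (N+M+2).choose (M+1) := by
      congr 1; omega
    have hg3 : (M+1+N+1).choose (N+1) = (M+1+N+1).choose (N+1) := rfl
    rw [hg1, hg2]
    linear_combination ih - q^(N+1)*p^(M+1)*h1 - p^(M+2)*q^(N+1)*h2
      - ((N+M+2).choose (M+1) : ℝ)*q^(N+1)*p^(M+1)*hpq

lemma mainId (p q : ℝ) (hpq : p + q = 1) (M : ℕ) : ∀ N : ℕ,
    p ^ (M+1) * ∑ k ∈ Finset.range (N+1), ((M+k).choose k : ℝ) * q ^ k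
    + q ^ (N+1) * ∑ j ∈ Finset.range (M+1), ((N+j).choose j : ℝ) * p ^ j = 1 := by
  intro N
  induction N with
  | zero =>
    simp only [Finset.range_one, Finset.sum_singleton, pow_zero, mul_one,
      Nat.add_zero, Nat.choose_zero_right, Nat.cast_one, Nat.zero_add, zero_add, pow_one,
      Nat.choose_self]
    have hg := geom_sum_mul p (M+1)
    have hsimp : ∀ j : ℕ, ((0+j).choose j : ℝ) = 1 := by
      intro j; simp
    simp only [hsimp, one_mul]
    linear_combination (-1 : ℝ) * hg + (∑ j ∈ Finset.range (M+1), p ^ j) * hpq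
  | succ N ih =>
    rw [Finset.sum_range_succ]
    have hk := keyT p q hpq N M
    have hg : (M+(N+1)).choose (N+1) = (M+N+1).choose (N+1) := by congr 1
    rw [hg]
    linear_combination ih - hk

/-- For positive integers `m`, `n` and `a, b > 0`,
`∫_0^∞ t^{m-1} e^{-at} Γ(n, bt) dt
  = Γ(n)Γ(m)/a^m [1 - (b/(a+b))^n ∑_{j=0}^{m-1} C(n+j-1, j)(a/(a+b))^j]`,
and in particular the integral converges. -/
theorem integral_poly_exp_upperGamma (a b : ℝ) (ha : 0 < a) (hb : 0 < b)
    (m n : ℕ) (hm : 0 < m) (hn : 0 < n) :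
    (∫ t in Ioi (0:ℝ), t ^ (m - 1) * Real.exp (-(a * t)) *
        ∫ s in Ioi (b * t), s ^ (n - 1) * Real.exp (-s)) =
      (Nat.factorial (n - 1) : ℝ) * (Nat.factorial (m - 1)) / a ^ m *
        (1 - (b / (a + b)) ^ n *
          ∑ j ∈ Finset.range m, (Nat.choose (n + j - 1) j : ℝ) * (a / (a + b)) ^ j) ∧
    IntegrableOn
      (fun t : ℝ => t ^ (m - 1) * Real.exp (-(a * t)) *
        ∫ s in Ioi (b * t), s ^ (n - 1) * Real.exp (-s)) (Ioi 0) := by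
  obtain ⟨M, rfl⟩ : ∃ M, m = M + 1 := ⟨m - 1, (Nat.succ_pred_eq_of_pos hm).symm⟩
  obtain ⟨N, rfl⟩ : ∃ N, n = N + 1 := ⟨n - 1, (Nat.succ_pred_eq_of_pos hn).symm⟩
  simp only [Nat.add_sub_cancel]
  have hab : (0:ℝ) < a + b := by linarith
  have habne : a + b ≠ 0 := ne_of_gt hab
  -- pointwise rewrite of the integrand
  have hpt : ∀ t : ℝ, t ^ M * Real.exp (-(a * t)) * ∫ s in Ioi (b * t), s ^ N * Real.exp (-s)
      = ∑ k ∈ Finset.range (N+1),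
          ((N.factorial : ℝ) / k.factorial * b ^ k) * (t ^ (M+k) * Real.exp (-((a+b) * t))) := by
    intro t
    rw [incGamma, Finset.sum_mul, Finset.mul_sum]
    apply Finset.sum_congr rfl
    intro k _
    rw [show Real.exp (-((a+b)*t)) = Real.exp (-(a*t)) * Real.exp (-(b*t)) by
          rw [← Real.exp_add]; ring_nf,
        mul_pow, pow_add]
    ring
  have hfun : (fun t : ℝ => t ^ M * Real.exp (-(a * t)) * ∫ s in Ioi (b * t), s ^ N * Real.exp (-s))
      = fun t : ℝ => ∑ k ∈ Finset.range (N+1),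
          ((N.factorial : ℝ) / k.factorial * b ^ k) * (t ^ (M+k) * Real.exp (-((a+b) * t))) :=
    funext hpt
  have hterm : ∀ k : ℕ, IntegrableOn
      (fun t : ℝ => ((N.factorial : ℝ) / k.factorial * b ^ k) * (t ^ (M+k) * Real.exp (-((a+b) * t))))
      (Ioi 0) := fun k => (intOn (M+k) hab 0).const_mul _
  have hint : IntegrableOn
      (fun t : ℝ => t ^ M * Real.exp (-(a * t)) * ∫ s in Ioi (b * t), s ^ N * Real.exp (-s))
      (Ioi 0) := by
    rw [hfun]
    exact integrable_finset_sum _ (fun k _ => hterm k)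
  refine ⟨?_, hint⟩
  rw [hfun]
  rw [MeasureTheory.integral_finset_sum _ (fun k _ => hterm k)]
  have hval : ∀ k ∈ Finset.range (N+1),
      (∫ t in Ioi (0:ℝ), ((N.factorial : ℝ) / k.factorial * b ^ k) * (t ^ (M+k) * Real.exp (-((a+b) * t))))
      = ((N.factorial : ℝ) / k.factorial * b ^ k) * (((M+k).factorial : ℝ) / (a+b) ^ (M+k+1)) := by
    intro k _
    rw [MeasureTheory.integral_const_mul, intVal (M+k) hab]
  rw [Finset.sum_congr rfl hval]
  -- algebra
  set p := a / (a + b) with hp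
  set q := b / (a + b) with hq
  have hpq : p + q = 1 := by rw [hp, hq]; field_simp
  have hmain := mainId p q hpq M N
  have hsimpc : ∀ j : ℕ, ((N + 1 + j - 1).choose j : ℝ) = ((N + j).choose j : ℝ) := by
    intro j; rw [show N+1+j-1 = N+j by omega]
  simp only [hsimpc]
  have h1 : 1 - q ^ (N+1) * ∑ j ∈ Finset.range (M+1), ((N+j).choose j : ℝ) * p ^ j
      = p ^ (M+1) * ∑ k ∈ Finset.range (N+1), ((M+k).choose k : ℝ) * q ^ k := by
    linear_combination -hmain
  rw [h1, Finset.mul_sum, Finset.mul_sum]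
  apply Finset.sum_congr rfl
  intro k _
  have hfac : (((M+k).factorial : ℕ) : ℝ) = ((M+k).choose k : ℝ) * (k.factorial : ℝ) * (M.factorial : ℝ) := by
    have := Nat.choose_mul_factorial_mul_factorial (n := M+k) (k := k) (by omega)
    rw [show M+k-k = M by omega] at this
    exact_mod_cast this.symm
  have hkfac : (k.factorial : ℝ) ≠ 0 := by exact_mod_cast k.factorial_ne_zero
  rw [hfac, hp, hq, div_pow, div_pow]
  rw [pow_add (a+b) (M+k) 1]
  field_simp
  ring
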